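/- Under the Markov chain X–Y–Z, the mixed information is bounded above by the minimum of the two mutual informations: I'(X;Z) ≤ min(I(X;Y), I(X;Z)). -/

import Mathlib

open Finset Real

lemma gibbs {ι : Type*} [Fintype ι] (a b : ι → ℝ) (ha : ∀ i, 0 ≤ a i)
    (hb : ∀ i, 0 ≤ b i) (hpos : ∀ i, 0 < a i → 0 < b i)
    (hsum : ∑ i, b i ≤ ∑ i, a i) :
    ∑ i, a i * logb 2 (b i / a i) ≤ 0 := by
  have hlog2 : (0:ℝ) < Real.log 2 := Real.log_pos (by norm_num)
  have key : ∀ i, a i * logb 2 (b i / a i) ≤ (b i - a i) / Real.log 2 := by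
    intro i
    rcases eq_or_lt_of_le (ha i) with h | h
    · rw [← h]
      simp only [zero_mul, sub_zero]
      exact div_nonneg (hb i) hlog2.le
    · have hbi := hpos i h
      have hdiv : 0 < b i / a i := div_pos hbi h
      calc a i * logb 2 (b i / a i) = a i * Real.log (b i / a i) / Real.log 2 := by
            rw [Real.logb]; ring
        _ ≤ a i * (b i / a i - 1) / Real.log 2 := by
            gcongr
            exact Real.log_le_sub_one_of_pos hdiv
        _ = (b i - a i) / Real.log 2 := by
            field_simp
  calc ∑ i, a i * logb 2 (b i / a i) ≤ ∑ i, (b i - a i) / Real.log 2 :=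
        Finset.sum_le_sum fun i _ => key i
    _ = (∑ i, b i - ∑ i, a i) / Real.log 2 := by
        rw [← Finset.sum_div, Finset.sum_sub_distrib]
    _ ≤ 0 := div_nonpos_of_nonpos_of_nonneg (by linarith) hlog2.le

lemma gibbs2 {α β : Type*} [Fintype α] [Fintype β] (a b : α → β → ℝ)
    (ha : ∀ i j, 0 ≤ a i j) (hb : ∀ i j, 0 ≤ b i j)
    (hpos : ∀ i j, 0 < a i j → 0 < b i j)
    (hsum : ∑ i, ∑ j, b i j ≤ ∑ i, ∑ j, a i j) :
    ∑ i, ∑ j, a i j * logb 2 (b i j / a i j) ≤ 0 := by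
  have := gibbs (fun p : α × β => a p.1 p.2) (fun p => b p.1 p.2)
    (fun p => ha p.1 p.2) (fun p => hb p.1 p.2) (fun p => hpos p.1 p.2)
    (by rw [Fintype.sum_prod_type, Fintype.sum_prod_type]; exact hsum)
  rwa [Fintype.sum_prod_type] at this

lemma gibbs3 {α β γ : Type*} [Fintype α] [Fintype β] [Fintype γ] (a b : α → β → γ → ℝ)
    (ha : ∀ i j k, 0 ≤ a i j k) (hb : ∀ i j k, 0 ≤ b i j k)
    (hpos : ∀ i j k, 0 < a i j k → 0 < b i j k)
    (hsum : ∑ i, ∑ j, ∑ k, b i j k ≤ ∑ i, ∑ j, ∑ k, a i j k) :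
    ∑ i, ∑ j, ∑ k, a i j k * logb 2 (b i j k / a i j k) ≤ 0 := by
  have := gibbs2 (fun i (p : β × γ) => a i p.1 p.2) (fun i p => b i p.1 p.2)
    (fun i p => ha i p.1 p.2) (fun i p => hb i p.1 p.2) (fun i p => hpos i p.1 p.2)
    (by simp_rw [Fintype.sum_prod_type]; exact hsum)
  simp_rw [Fintype.sum_prod_type] at this
  exact this

theorem stmt9 {𝒳 𝒴 𝒵 : Type*} [Fintype 𝒳] [Fintype 𝒴] [Fintype 𝒵]
    [Nonempty 𝒳] [Nonempty 𝒴] [Nonempty 𝒵]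
    (P : 𝒳 → 𝒴 → 𝒵 → ℝ)
    (hPnn : ∀ x y z, 0 ≤ P x y z)
    (hPsum : ∑ x, ∑ y, ∑ z, P x y z = 1)
    (PX : 𝒳 → ℝ) (hPX : ∀ x, PX x = ∑ y, ∑ z, P x y z)
    (PY : 𝒴 → ℝ) (hPY : ∀ y, PY y = ∑ x, ∑ z, P x y z)
    (PZ : 𝒵 → ℝ) (hPZ : ∀ z, PZ z = ∑ x, ∑ y, P x y z)
    (PXY : 𝒳 → 𝒴 → ℝ) (hPXY : ∀ x y, PXY x y = ∑ z, P x y z)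
    (PXZ : 𝒳 → 𝒵 → ℝ) (hPXZ : ∀ x z, PXZ x z = ∑ y, P x y z)
    (PYZ : 𝒴 → 𝒵 → ℝ) (hPYZ : ∀ y z, PYZ y z = ∑ x, P x y z)
    (hMarkov : ∀ x y z, P x y z * PY y = PXY x y * PYZ y z)
    (Q : 𝒵 → 𝒳 → ℝ)
    (hQnn : ∀ z x, 0 ≤ Q z x)
    (hQsum : ∀ z, ∑ x, Q z x = 1)
    (hQpos : ∀ x z, 0 < PXZ x z → 0 < Q z x)
    : (∑ x, ∑ z, PXZ x z * logb 2 (Q z x / PX x)) ≤ min (∑ x, ∑ y, PXY x y * logb 2 (PXY x y / (PX x * PY y))) (∑ x, ∑ z, PXZ x z * logb 2 (PXZ x z / (PX x * PZ z))) := by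
  -- nonnegativity of marginals
  have hPXZnn : ∀ x z, 0 ≤ PXZ x z := fun x z => by
    rw [hPXZ]; exact Finset.sum_nonneg fun y _ => hPnn x y z
  have hPXYnn : ∀ x y, 0 ≤ PXY x y := fun x y => by
    rw [hPXY]; exact Finset.sum_nonneg fun z _ => hPnn x y z
  have hPYZnn : ∀ y z, 0 ≤ PYZ y z := fun y z => by
    rw [hPYZ]; exact Finset.sum_nonneg fun x _ => hPnn x y z
  have hPZnn : ∀ z, 0 ≤ PZ z := fun z => by
    rw [hPZ]; exact Finset.sum_nonneg fun x _ => Finset.sum_nonneg fun y _ => hPnn x y z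
  -- pointwise bounds
  have hPle_PXZ : ∀ x y z, P x y z ≤ PXZ x z := fun x y z => by
    rw [hPXZ]; exact Finset.single_le_sum (fun y' _ => hPnn x y' z) (mem_univ y)
  have hPle_PXY : ∀ x y z, P x y z ≤ PXY x y := fun x y z => by
    rw [hPXY]; exact Finset.single_le_sum (fun z' _ => hPnn x y z') (mem_univ z)
  have hPle_PYZ : ∀ x y z, P x y z ≤ PYZ y z := fun x y z => by
    rw [hPYZ]; exact Finset.single_le_sum (fun x' _ => hPnn x' y z) (mem_univ x)
  have hPXZle_PX : ∀ x z, PXZ x z ≤ PX x := fun x z => by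
    rw [hPX]
    have : PXZ x z = ∑ y, P x y z := hPXZ x z
    calc PXZ x z = ∑ y, P x y z := hPXZ x z
      _ ≤ ∑ y, ∑ z', P x y z' := Finset.sum_le_sum fun y _ =>
          Finset.single_le_sum (fun z' _ => hPnn x y z') (mem_univ z)
  have hPXZle_PZ : ∀ x z, PXZ x z ≤ PZ z := fun x z => by
    rw [hPZ]
    calc PXZ x z = ∑ y, P x y z := hPXZ x z
      _ ≤ ∑ x', ∑ y, P x' y z := Finset.single_le_sum
          (f := fun x' => ∑ y, P x' y z)
          (fun x' _ => Finset.sum_nonneg fun y _ => hPnn x' y z) (mem_univ x)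
  have hPXYle_PY : ∀ x y, PXY x y ≤ PY y := fun x y => by
    rw [hPY]
    calc PXY x y = ∑ z, P x y z := hPXY x y
      _ ≤ ∑ x', ∑ z, P x' y z := Finset.single_le_sum
          (f := fun x' => ∑ z, P x' y z)
          (fun x' _ => Finset.sum_nonneg fun z _ => hPnn x' y z) (mem_univ x)
  -- total masses
  have hPXZsum : ∑ x, ∑ z, PXZ x z = 1 := by
    rw [← hPsum]
    refine Finset.sum_congr rfl fun x _ => ?_
    simp_rw [hPXZ]
    exact Finset.sum_comm
  have hPZsum : ∑ z, PZ z = 1 := by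
    simp_rw [hPZ]
    rw [← hPsum]
    calc ∑ z, ∑ x, ∑ y, P x y z = ∑ x, ∑ z, ∑ y, P x y z := Finset.sum_comm
      _ = ∑ x, ∑ y, ∑ z, P x y z := Finset.sum_congr rfl fun x _ => Finset.sum_comm
  have hPYZsum : ∑ y, ∑ z, PYZ y z = 1 := by
    simp_rw [hPYZ]
    rw [← hPsum]
    calc ∑ y, ∑ z, ∑ x, P x y z = ∑ y, ∑ x, ∑ z, P x y z :=
          Finset.sum_congr rfl fun y _ => Finset.sum_comm
      _ = ∑ x, ∑ y, ∑ z, P x y z := Finset.sum_comm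
  refine le_min ?_ ?_
  · -- I'(X;Z) ≤ I(X;Y)
    rw [← sub_nonpos, ← Finset.sum_sub_distrib]
    have heq : ∀ x, (∑ z, PXZ x z * logb 2 (Q z x / PX x)) -
        (∑ y, PXY x y * logb 2 (PXY x y / (PX x * PY y))) =
        ∑ y, ∑ z, P x y z * logb 2 ((PYZ y z * Q z x) / P x y z) := by
      intro x
      have h1 : (∑ z, PXZ x z * logb 2 (Q z x / PX x)) =
          ∑ y, ∑ z, P x y z * logb 2 (Q z x / PX x) := by
        rw [Finset.sum_comm]
        refine Finset.sum_congr rfl fun z _ => ?_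
        rw [hPXZ, Finset.sum_mul]
      have h2 : (∑ y, PXY x y * logb 2 (PXY x y / (PX x * PY y))) =
          ∑ y, ∑ z, P x y z * logb 2 (PXY x y / (PX x * PY y)) := by
        refine Finset.sum_congr rfl fun y _ => ?_
        rw [hPXY, Finset.sum_mul]
      rw [h1, h2, ← Finset.sum_sub_distrib]
      refine Finset.sum_congr rfl fun y _ => ?_
      rw [← Finset.sum_sub_distrib]
      refine Finset.sum_congr rfl fun z _ => ?_
      rcases eq_or_lt_of_le (hPnn x y z) with h | h
      · rw [← h]; ring
      · have hXZ : 0 < PXZ x z := lt_of_lt_of_le h (hPle_PXZ x y z)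
        have hXY : 0 < PXY x y := lt_of_lt_of_le h (hPle_PXY x y z)
        have hYZ : 0 < PYZ y z := lt_of_lt_of_le h (hPle_PYZ x y z)
        have hX : 0 < PX x := lt_of_lt_of_le hXZ (hPXZle_PX x z)
        have hY : 0 < PY y := lt_of_lt_of_le hXY (hPXYle_PY x y)
        have hQ : 0 < Q z x := hQpos x z hXZ
        rw [← mul_sub]
        congr 1
        rw [Real.logb, Real.logb, Real.logb, ← sub_div]
        congr 1
        rw [← Real.log_div (by positivity) (by positivity)]
        congr 1
        field_simp
        linear_combination hMarkov x y z
    calc (∑ x, ((∑ z, PXZ x z * logb 2 (Q z x / PX x)) -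
            ∑ y, PXY x y * logb 2 (PXY x y / (PX x * PY y))))
        = ∑ x, ∑ y, ∑ z, P x y z * logb 2 ((PYZ y z * Q z x) / P x y z) :=
          Finset.sum_congr rfl fun x _ => heq x
      _ ≤ 0 := by
          refine gibbs3 (fun x y z => P x y z) (fun x y z => PYZ y z * Q z x)
            hPnn (fun x y z => mul_nonneg (hPYZnn y z) (hQnn z x))
            (fun x y z h => mul_pos (lt_of_lt_of_le h (hPle_PYZ x y z))
              (hQpos x z (lt_of_lt_of_le h (hPle_PXZ x y z)))) ?_
          rw [hPsum]
          have : ∑ x, ∑ y, ∑ z, PYZ y z * Q z x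
              = ∑ y, ∑ z, PYZ y z * ∑ x, Q z x := by
            calc ∑ x, ∑ y, ∑ z, PYZ y z * Q z x
                = ∑ y, ∑ x, ∑ z, PYZ y z * Q z x := Finset.sum_comm
              _ = ∑ y, ∑ z, ∑ x, PYZ y z * Q z x :=
                  Finset.sum_congr rfl fun y _ => Finset.sum_comm
              _ = ∑ y, ∑ z, PYZ y z * ∑ x, Q z x :=
                  Finset.sum_congr rfl fun y _ => Finset.sum_congr rfl fun z _ =>
                    (Finset.mul_sum _ _ _).symm
          rw [this]
          simp_rw [hQsum, mul_one]
          rw [hPYZsum]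
  · -- I'(X;Z) ≤ I(X;Z)
    rw [← sub_nonpos, ← Finset.sum_sub_distrib]
    have heq : ∀ x, (∑ z, PXZ x z * logb 2 (Q z x / PX x)) -
        (∑ z, PXZ x z * logb 2 (PXZ x z / (PX x * PZ z))) =
        ∑ z, PXZ x z * logb 2 ((PZ z * Q z x) / PXZ x z) := by
      intro x
      rw [← Finset.sum_sub_distrib]
      refine Finset.sum_congr rfl fun z _ => ?_
      rcases eq_or_lt_of_le (hPXZnn x z) with h | h
      · rw [← h]; ring
      · have hX : 0 < PX x := lt_of_lt_of_le h (hPXZle_PX x z)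
        have hZ : 0 < PZ z := lt_of_lt_of_le h (hPXZle_PZ x z)
        have hQ : 0 < Q z x := hQpos x z h
        rw [← mul_sub]
        congr 1
        rw [Real.logb, Real.logb, Real.logb, ← sub_div]
        congr 1
        rw [← Real.log_div (by positivity) (by positivity)]
        congr 1
        field_simp
    calc (∑ x, ((∑ z, PXZ x z * logb 2 (Q z x / PX x)) -
            ∑ z, PXZ x z * logb 2 (PXZ x z / (PX x * PZ z))))
        = ∑ x, ∑ z, PXZ x z * logb 2 ((PZ z * Q z x) / PXZ x z) :=
          Finset.sum_congr rfl fun x _ => heq x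
      _ ≤ 0 := by
          refine gibbs2 (fun x z => PXZ x z) (fun x z => PZ z * Q z x)
            hPXZnn (fun x z => mul_nonneg (hPZnn z) (hQnn z x))
            (fun x z h => mul_pos (lt_of_lt_of_le h (hPXZle_PZ x z)) (hQpos x z h)) ?_
          rw [hPXZsum]
          have : ∑ x, ∑ z, PZ z * Q z x = ∑ z, PZ z * ∑ x, Q z x := by
            calc ∑ x, ∑ z, PZ z * Q z x = ∑ z, ∑ x, PZ z * Q z x := Finset.sum_comm
              _ = ∑ z, PZ z * ∑ x, Q z x :=
                  Finset.sum_congr rfl fun z _ => (Finset.mul_sum _ _ _).symm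
          rw [this]
          simp_rw [hQsum, mul_one]
          rw [hPZsum]
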